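/- Let p be a prime, q = p^e, m, k ≥ 1, let {γ_1,…,γ_{em}} be a basis of 𝔽_{q^m} over 𝔽_p, let {β_1,…,β_e} be a basis of 𝔽_q over 𝔽_p, and let f ∈ 𝔽_{q^m}[x_1,…,x_k] be a polynomial of degree at most d. Then there exist polynomials G_1,…,G_e ∈ 𝔽_p[y_{1,1},…,y_{k,em}] in emk variables, each of total degree at most W_p(d, 𝔽_{q^m}^k), such that for all y_{i,j} ∈ 𝔽_p and each 1 ≤ rr ≤ e, G_rr(y) = Tr_{q/p}( β_rr · Tr_{q^m/q}( f( ∑_{j=1}^{em} y_{1,j} γ_j, …, ∑_{j=1}^{em} y_{k,j} γ_j ) ) ); consequently Tr_{q^m/q}(f(x(y))) = 0 if and only if G_1(y) = ⋯ = G_e(y) = 0. Here W_p(d, 𝔽_{q^m}^k) = max{ S_p(t_1)+⋯+S_p(t_k) : (t_1,…,t_k) ∈ [0, q^m−1]^k, t_1+⋯+t_k ≤ d }. -/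

import Mathlib

open Finset

lemma list_getD_sum (L : List ℕ) :
    ∑ a ∈ Finset.range L.length, L.getD a 0 = L.sum := by
  induction L with
  | nil => simp
  | cons c L ih =>
    rw [List.length_cons, Finset.sum_range_succ']
    simp only [List.getD_cons_succ, List.getD_cons_zero]
    rw [ih, List.sum_cons, add_comm]

lemma pow_ofDigits {R : Type*} [CommMonoid R] (p : ℕ) (x : R) (L : List ℕ) :
    x ^ Nat.ofDigits p L = ∏ a ∈ Finset.range L.length, (x ^ p ^ a) ^ L.getD a 0 := by
  induction L generalizing x with
  | nil => simp [Nat.ofDigits]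
  | cons c L ih =>
    rw [List.length_cons, Finset.prod_range_succ', Nat.ofDigits_cons, pow_add, pow_mul, ih (x ^ p)]
    simp only [List.getD_cons_succ, List.getD_cons_zero, pow_zero, pow_one]
    rw [mul_comm]
    congr 1
    refine Finset.prod_congr rfl fun a _ => ?_
    rw [show p ^ (a + 1) = p * p ^ a from pow_succ' p a, pow_mul]

def redExp (Q t : ℕ) : ℕ := if t = 0 then 0 else (t - 1) % (Q - 1) + 1

lemma redExp_le (Q t : ℕ) : redExp Q t ≤ t := by
  unfold redExp; split
  · omega
  · have := Nat.mod_le (t - 1) (Q - 1); omega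

lemma redExp_lt {Q : ℕ} (hQ : 2 ≤ Q) (t : ℕ) : redExp Q t < Q := by
  unfold redExp; split
  · omega
  · have := Nat.mod_lt (t - 1) (y := Q - 1) (by omega); omega

lemma pow_redExp {F : Type*} [Field F] [Fintype F] {Q : ℕ} (hF : Fintype.card F = Q)
    (x : F) (t : ℕ) : x ^ t = x ^ redExp Q t := by
  unfold redExp
  split
  · rename_i ht; rw [ht]
  · rename_i ht
    rcases eq_or_ne x 0 with rfl | hx
    · rw [zero_pow ht, zero_pow (by omega)]
    · have h1 : x ^ (Q - 1) = 1 := by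
        subst hF; exact FiniteField.pow_card_sub_one_eq_one x hx
      have hQ2 : 2 ≤ Q := by rw [← hF]; exact Fintype.one_lt_card
      conv_lhs => rw [show t = (t - 1) % (Q - 1) + 1 + (Q - 1) * ((t - 1) / (Q - 1)) by
        have := Nat.mod_add_div (t - 1) (Q - 1); omega]
      rw [pow_add, pow_mul, h1, one_pow, mul_one]

/-- Let `p` be a prime, `q = p^e`, `m, k ≥ 1`, let
`γ_1,…,γ_{em}` be a basis of `𝔽_{q^m}` over `𝔽_p`, let `β_1,…,β_e` be a basis of
`𝔽_q` over `𝔽_p`, and let `f ∈ 𝔽_{q^m}[x_1,…,x_k]` have degree at most `d`.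
Then there are polynomials `G_1,…,G_e` over `𝔽_p` in the `emk` variables
`y_{i,j}`, each of total degree at most `W_p(d, 𝔽_{q^m}^k)`, with
`G_r(y) = Tr_{q/p}( β_r · Tr_{q^m/q}( f(∑_j y_{1,j}γ_j, …, ∑_j y_{k,j}γ_j) ) )`
for all `y` over `𝔽_p`; consequently `Tr_{q^m/q}(f(x(y))) = 0` iff all `G_r(y) = 0`. -/
theorem stmt_14 (p e m k d : ℕ) [Fact p.Prime] (he : 1 ≤ e) (hm : 1 ≤ m) (hk : 1 ≤ k)
    (Fq Fqm : Type) [Field Fq] [Field Fqm] [Fintype Fq] [Fintype Fqm]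
    [Algebra (ZMod p) Fq] [Algebra (ZMod p) Fqm] [Algebra Fq Fqm]
    [IsScalarTower (ZMod p) Fq Fqm]
    (hq : Fintype.card Fq = p ^ e) (hqm : Fintype.card Fqm = (p ^ e) ^ m)
    (γ : Module.Basis (Fin (e * m)) (ZMod p) Fqm)
    (β : Module.Basis (Fin e) (ZMod p) Fq)
    (W : ℕ)
    (hW : W = ((Fintype.piFinset fun _ : Fin k => Finset.range ((p ^ e) ^ m)).filter
        (fun t => ∑ i, t i ≤ d)).sup (fun t => ∑ i, (Nat.digits p (t i)).sum))
    (f : MvPolynomial (Fin k) Fqm) (hf : f.totalDegree ≤ d) :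
    ∃ G : Fin e → MvPolynomial (Fin k × Fin (e * m)) (ZMod p),
      (∀ r, (G r).totalDegree ≤ W) ∧
      (∀ (y : Fin k × Fin (e * m) → ZMod p) (r : Fin e),
        MvPolynomial.eval y (G r)
          = Algebra.trace (ZMod p) Fq (β r *
              Algebra.trace Fq Fqm
                (MvPolynomial.eval (fun i => ∑ j, y (i, j) • γ j) f))) ∧
      (∀ y : Fin k × Fin (e * m) → ZMod p,
        (Algebra.trace Fq Fqm
            (MvPolynomial.eval (fun i => ∑ j, y (i, j) • γ j) f) = 0
          ↔ ∀ r : Fin e, MvPolynomial.eval y (G r) = 0)) := by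
  classical
  open MvPolynomial in
  set Q : ℕ := (p ^ e) ^ m with hQdef
  have hp : p.Prime := Fact.out
  have hQ2 : 2 ≤ Q := by
    have h1 : p ≤ p ^ e := Nat.le_self_pow (Nat.one_le_iff_ne_zero.mp he) p
    have h2 : p ^ e ≤ (p ^ e) ^ m := Nat.le_self_pow (Nat.one_le_iff_ne_zero.mp hm) _
    have h3 := hp.two_le
    exact le_trans h3 (le_trans h1 h2)
  haveI : CharP Fqm p := charP_of_injective_algebraMap (algebraMap (ZMod p) Fqm).injective p
  haveI : ExpChar Fqm p := ExpChar.prime hp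
  -- the substituted field elements
  set x : (Fin k × Fin (e * m) → ZMod p) → Fin k → Fqm :=
    fun y i => ∑ j, y (i, j) • γ j with hxdef
  have hfrob : ∀ (y : Fin k × Fin (e * m) → ZMod p) (i : Fin k) (a : ℕ),
      (x y i) ^ p ^ a = ∑ j, y (i, j) • (γ j ^ p ^ a) := by
    intro y i a
    rw [hxdef, sum_pow_char_pow]
    refine Finset.sum_congr rfl fun j _ => ?_
    rw [Algebra.smul_def, Algebra.smul_def, mul_pow, ← map_pow, ZMod.pow_card_pow]
  -- per-variable substitution polynomials
  set Qp : Fin k → ℕ → MvPolynomial (Fin k × Fin (e * m)) Fqm :=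
    fun i u => ∏ a ∈ Finset.range (Nat.digits p u).length,
      (∑ j, (X (i, j) * C (γ j ^ p ^ a))) ^ ((Nat.digits p u).getD a 0) with hQp
  have hQpdeg : ∀ i u, (Qp i u).totalDegree ≤ (Nat.digits p u).sum := by
    intro i u
    refine le_trans (totalDegree_finset_prod _ _) ?_
    rw [← list_getD_sum (Nat.digits p u)]
    refine Finset.sum_le_sum fun a _ => ?_
    refine le_trans (totalDegree_pow _ _) ?_
    have h1 : (∑ j, (X (i, j) * C (γ j ^ p ^ a)) :
        MvPolynomial (Fin k × Fin (e * m)) Fqm).totalDegree ≤ 1 := by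
      refine le_trans (totalDegree_finset_sum _ _) ?_
      refine Finset.sup_le fun j _ => ?_
      refine le_trans (totalDegree_mul _ _) ?_
      rw [totalDegree_X, totalDegree_C]
    simpa using Nat.mul_le_mul_left ((Nat.digits p u).getD a 0) h1
  have hQpeval : ∀ (y : Fin k × Fin (e * m) → ZMod p) (i : Fin k) (u : ℕ),
      eval (fun ij => algebraMap (ZMod p) Fqm (y ij)) (Qp i u) = (x y i) ^ u := by
    intro y i u
    conv_rhs => rw [← Nat.ofDigits_digits p u, pow_ofDigits]
    rw [hQp, map_prod]
    refine Finset.prod_congr rfl fun a _ => ?_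
    rw [map_pow]
    congr 1
    rw [hfrob y i a, map_sum]
    refine Finset.sum_congr rfl fun j _ => ?_
    simp [Algebra.smul_def]
  -- the big polynomial over Fqm
  set P : MvPolynomial (Fin k × Fin (e * m)) Fqm :=
    ∑ s ∈ f.support, C (f.coeff s) * ∏ i, Qp i (redExp Q (s i)) with hPdef
  have hPdeg : P.totalDegree ≤ W := by
    refine le_trans (totalDegree_finset_sum _ _) ?_
    refine Finset.sup_le fun s hs => ?_
    refine le_trans (totalDegree_mul _ _) ?_
    rw [totalDegree_C, zero_add]
    refine le_trans (totalDegree_finset_prod _ _) ?_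
    refine le_trans (Finset.sum_le_sum fun i _ => hQpdeg i (redExp Q (s i))) ?_
    rw [hW]
    have hmem : (fun i => redExp Q (s i)) ∈ ((Fintype.piFinset fun _ : Fin k =>
        Finset.range ((p ^ e) ^ m)).filter (fun t => ∑ i, t i ≤ d)) := by
      rw [Finset.mem_filter]
      constructor
      · rw [Fintype.mem_piFinset]
        intro i
        rw [Finset.mem_range]
        exact redExp_lt hQ2 (s i)
      · calc ∑ i, redExp Q (s i) ≤ ∑ i, s i := Finset.sum_le_sum fun i _ => redExp_le Q (s i)
          _ = s.sum fun _ n => n := (Finsupp.sum_fintype s (fun _ n => n) fun _ => rfl).symm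
          _ ≤ f.totalDegree := MvPolynomial.le_totalDegree hs
          _ ≤ d := hf
    exact Finset.le_sup (f := fun t => ∑ i, (Nat.digits p (t i)).sum) hmem
  have hPeval : ∀ y : Fin k × Fin (e * m) → ZMod p,
      eval (fun ij => algebraMap (ZMod p) Fqm (y ij)) P = eval (x y) f := by
    intro y
    rw [hPdef, map_sum, eval_eq' (x y) f]
    refine Finset.sum_congr rfl fun s hs => ?_
    rw [map_mul, eval_C]
    congr 1
    rw [map_prod]
    refine Finset.prod_congr rfl fun i _ => ?_
    rw [hQpeval y i (redExp Q (s i)), ← pow_redExp hqm (x y i) (s i)]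
  -- the linear trace maps
  set L : Fin e → (Fqm →ₗ[ZMod p] ZMod p) := fun r =>
    (Algebra.trace (ZMod p) Fq) ∘ₗ (LinearMap.mulLeft (ZMod p) (β r)) ∘ₗ
      ((Algebra.trace Fq Fqm).restrictScalars (ZMod p)) with hLdef
  have hLapp : ∀ r c, L r c = Algebra.trace (ZMod p) Fq (β r * Algebra.trace Fq Fqm c) := by
    intro r c; rfl
  -- the polynomials G
  set G : Fin e → MvPolynomial (Fin k × Fin (e * m)) (ZMod p) :=
    fun r => ∑ s ∈ P.support, monomial s (L r (P.coeff s)) with hGdef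
  have hGeval : ∀ (y : Fin k × Fin (e * m) → ZMod p) (r : Fin e),
      eval y (G r) = L r (eval (fun ij => algebraMap (ZMod p) Fqm (y ij)) P) := by
    intro y r
    rw [hGdef, eval_eq (fun ij => algebraMap (ZMod p) Fqm (y ij)) P, map_sum, map_sum]
    refine Finset.sum_congr rfl fun s hs => ?_
    have h2 : (∏ i ∈ s.support, (algebraMap (ZMod p) Fqm (y i)) ^ s i)
        = algebraMap (ZMod p) Fqm (∏ i ∈ s.support, (y i) ^ s i) := by
      rw [map_prod]
      exact Finset.prod_congr rfl fun i _ => (map_pow _ _ _).symm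
    rw [eval_monomial, h2, mul_comm (P.coeff s), ← Algebra.smul_def, map_smul, smul_eq_mul,
      mul_comm]
    rfl
  refine ⟨G, ?_, ?_, ?_⟩
  · intro r
    rw [hGdef]
    refine le_trans (totalDegree_finset_sum _ _) ?_
    refine Finset.sup_le fun s hs => ?_
    refine le_trans (totalDegree_monomial_le _ _) ?_
    exact le_trans (MvPolynomial.le_totalDegree hs) hPdeg
  · intro y r
    rw [hGeval y r, hPeval y, hLapp]
  · intro y
    -- nondegeneracy of the trace form
    haveI : FiniteDimensional (ZMod p) Fq := Module.Finite.of_basis β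
    have key : ∀ w : Fq, w = 0 ↔ ∀ r, Algebra.trace (ZMod p) Fq (β r * w) = 0 := by
      intro w
      constructor
      · intro hw r; simp [hw]
      · intro h
        refine (traceForm_nondegenerate (ZMod p) Fq).1 w fun z => ?_
        have hz : z = ∑ r, β.repr z r • β r := (Module.Basis.sum_repr β z).symm
        rw [Algebra.traceForm_apply, hz, Finset.mul_sum, map_sum]
        refine Finset.sum_eq_zero fun r _ => ?_
        rw [mul_smul_comm, map_smul, mul_comm, h r, smul_zero]
    have h3 : ∀ r : Fin e, eval y (G r)
        = Algebra.trace (ZMod p) Fq (β r * Algebra.trace Fq Fqm (eval (x y) f)) := by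
      intro r
      rw [← hLapp, hGeval y r, hPeval y]
    rw [key (Algebra.trace Fq Fqm (eval (x y) f))]
    constructor
    · intro h r; rw [h3 r]; exact h r
    · intro h r; rw [← h3 r]; exact h r
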